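/- Let Q = {x ∈ ℝ^n : x ≥ 0, Ax ≤ b} be a packing polyhedron with A_{ij} ≤ b_i for all i ∈ [m] and j ∈ [n], and let k ≥ 1 be an integer. Let c ∈ ℝ^n with c ≥ 0, set z^{LP} = sup{cᵀx : x ∈ Q} and z^I = sup{cᵀx : x ∈ Q ∩ ℤ^n}, and assume 0 < z^I and z^{LP} < ∞. Then every integer ℓ ≥ 1 such that the ℓ-fold iterated k-aggregation closure 𝒜_k^ℓ(Q) equals conv(Q ∩ ℤ^n) satisfies ℓ ≥ ⌈log₂(z^{LP}/z^I) / log₂(k+1)⌉. -/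

import Mathlib

open Finset

/-- Dot product of two vectors in `ℝ^n`. -/
def dotp {n : ℕ} (c x : Fin n → ℝ) : ℝ := ∑ j, c j * x j

/-- A point of `ℝ^n` is integral if all its coordinates are integers. -/
def isIntPt {n : ℕ} (x : Fin n → ℝ) : Prop := ∀ j, ∃ z : ℤ, x j = (z : ℝ)

/-- The value `sup { cᵀ x : x ∈ S }`, in the extended reals. -/
noncomputable def supVal {n : ℕ} (c : Fin n → ℝ) (S : Set (Fin n → ℝ)) : EReal :=
  ⨆ x ∈ S, ((dotp c x : ℝ) : EReal)

/-- The value `inf { cᵀ x : x ∈ S }`, in the extended reals. -/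
noncomputable def infVal {n : ℕ} (c : Fin n → ℝ) (S : Set (Fin n → ℝ)) : EReal :=
  ⨅ x ∈ S, ((dotp c x : ℝ) : EReal)

/-- The polyhedron `{x ≥ 0 : A x ≤ b}`. -/
def packLP {n m : ℕ} (A : Matrix (Fin m) (Fin n) ℝ) (b : Fin m → ℝ) : Set (Fin n → ℝ) :=
  {x | (∀ j, 0 ≤ x j) ∧ ∀ i, dotp (A i) x ≤ b i}

/-- Aggregation closure of a packing polyhedron. -/
def aggP {n m : ℕ} (A : Matrix (Fin m) (Fin n) ℝ) (b : Fin m → ℝ) : Set (Fin n → ℝ) :=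
  ⋂ lam : {l : Fin m → ℝ // ∀ i, 0 ≤ l i},
    convexHull ℝ {x | (∀ j, 0 ≤ x j) ∧ isIntPt x ∧
      dotp (fun j => ∑ i, lam.1 i * A i j) x ≤ ∑ i, lam.1 i * b i}

/-- 1-row aggregation closure of a packing polyhedron. -/
def oneAggP {n m : ℕ} (A : Matrix (Fin m) (Fin n) ℝ) (b : Fin m → ℝ) : Set (Fin n → ℝ) :=
  ⋂ i : Fin m, convexHull ℝ {x | (∀ j, 0 ≤ x j) ∧ isIntPt x ∧ dotp (A i) x ≤ b i}

/-- Chvátal–Gomory closure of a set `P ⊆ ℝ^n`. -/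
def cgClosure {n : ℕ} (P : Set (Fin n → ℝ)) : Set (Fin n → ℝ) :=
  {x | ∀ (c : Fin n → ℤ) (δ : ℝ),
    (∀ y ∈ P, δ ≤ ∑ j, (c j : ℝ) * y j) → ((⌈δ⌉ : ℤ) : ℝ) ≤ ∑ j, (c j : ℝ) * x j}

/-- 1-row CG closure of a packing polyhedron. -/
def oneCGP {n m : ℕ} (A : Matrix (Fin m) (Fin n) ℝ) (b : Fin m → ℝ) : Set (Fin n → ℝ) :=
  ⋂ i : Fin m, cgClosure {x | (∀ j, 0 ≤ x j) ∧ dotp (A i) x ≤ b i}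

/-- Covering polyhedron with bounds `u j` on coordinates `j ∈ J` (coordinates outside `J`
are unbounded above). -/
def coverLP {n m : ℕ} (A : Matrix (Fin m) (Fin n) ℝ) (b : Fin m → ℝ)
    (J : Finset (Fin n)) (u : Fin n → ℝ) : Set (Fin n → ℝ) :=
  {x | (∀ j, 0 ≤ x j) ∧ (∀ j ∈ J, x j ≤ u j) ∧ ∀ i, b i ≤ dotp (A i) x}

/-- Aggregation closure of a covering polyhedron with bounds. -/
def aggC {n m : ℕ} (A : Matrix (Fin m) (Fin n) ℝ) (b : Fin m → ℝ)
    (J : Finset (Fin n)) (u : Fin n → ℝ) : Set (Fin n → ℝ) :=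
  ⋂ lam : {l : Fin m → ℝ // ∀ i, 0 ≤ l i},
    convexHull ℝ {x | (∀ j, 0 ≤ x j) ∧ isIntPt x ∧ (∀ j ∈ J, x j ≤ u j) ∧
      (∑ i, lam.1 i * b i) ≤ dotp (fun j => ∑ i, lam.1 i * A i j) x}

/-- 1-row aggregation closure of a covering polyhedron with bounds. -/
def oneAggC {n m : ℕ} (A : Matrix (Fin m) (Fin n) ℝ) (b : Fin m → ℝ)
    (J : Finset (Fin n)) (u : Fin n → ℝ) : Set (Fin n → ℝ) :=
  ⋂ i : Fin m, convexHull ℝ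
    {x | (∀ j, 0 ≤ x j) ∧ isIntPt x ∧ (∀ j ∈ J, x j ≤ u j) ∧ b i ≤ dotp (A i) x}

/-- 1-row CG closure of a covering polyhedron with bounds. -/
def oneCGC {n m : ℕ} (A : Matrix (Fin m) (Fin n) ℝ) (b : Fin m → ℝ)
    (J : Finset (Fin n)) (u : Fin n → ℝ) : Set (Fin n → ℝ) :=
  ⋂ i : Fin m, cgClosure {x | (∀ j, 0 ≤ x j) ∧ (∀ j ∈ J, x j ≤ u j) ∧ b i ≤ dotp (A i) x}

/-- The `k`-aggregation closure of a set `Q ⊆ ℝ^n`: the intersection, over all nonnegative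
systems `D x ≤ f` of `k` inequalities valid for `Q`, of the integer hulls
`conv({x ∈ ℤ^n_+ : D x ≤ f})`. -/
def aggKP {n : ℕ} (k : ℕ) (Q : Set (Fin n → ℝ)) : Set (Fin n → ℝ) :=
  ⋂ Df : {Df : Matrix (Fin k) (Fin n) ℝ × (Fin k → ℝ) //
      (∀ i j, 0 ≤ Df.1 i j) ∧ (∀ i, 0 ≤ Df.2 i) ∧ ∀ x ∈ Q, ∀ i, dotp (Df.1 i) x ≤ Df.2 i},
    convexHull ℝ {x | (∀ j, 0 ≤ x j) ∧ isIntPt x ∧ ∀ i, dotp (Df.1.1 i) x ≤ Df.1.2 i}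

private lemma mem_hull_of_comb {n : ℕ} {S : Set (Fin n → ℝ)} {ι : Type} [Fintype ι]
    (p : ι → (Fin n → ℝ)) (w : ι → ℝ) (hw : ∀ i, 0 ≤ w i) (hws : ∑ i, w i ≤ 1)
    (hp : ∀ i, p i ∈ S) (h0 : (0 : Fin n → ℝ) ∈ S) :
    (∑ i, w i • p i) ∈ convexHull ℝ S := by
  classical
  set w' : Option ι → ℝ := fun o => o.elim (1 - ∑ i, w i) w with hw'
  set p' : Option ι → (Fin n → ℝ) := fun o => o.elim 0 p with hp'
  have hsum : ∑ o : Option ι, w' o = 1 := by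
    rw [Fintype.sum_option]; simp [w']
  have hmem := Finset.centerMass_mem_convexHull (s := S) (Finset.univ : Finset (Option ι))
    (w := w') (fun i _ => by cases i <;> simp [w', hw, sub_nonneg.2 hws])
    (by rw [hsum]; norm_num)
    (z := p') (fun i _ => by cases i <;> simp [p', hp, h0])
  rw [Finset.centerMass, hsum, inv_one, one_smul, Fintype.sum_option] at hmem
  simpa [p', w'] using hmem

private lemma kernel_vec {n kk : ℕ} (D : Matrix (Fin kk) (Fin n) ℝ) (s : Finset (Fin n))
    (hcard : kk < s.card) :
    ∃ h : Fin n → ℝ, h ≠ 0 ∧ (∀ j, j ∉ s → h j = 0) ∧ ∀ i, ∑ j, D i j * h j = 0 := by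
  classical
  set ext : (↥s → ℝ) →ₗ[ℝ] (Fin n → ℝ) :=
    { toFun := fun y j => if hj : j ∈ s then y ⟨j, hj⟩ else 0
      map_add' := by intro a b; funext j; by_cases hj : j ∈ s <;> simp [hj]
      map_smul' := by intro a b; funext j; by_cases hj : j ∈ s <;> simp [hj] } with hext
  set φ := (Matrix.mulVecLin D).comp ext with hφ
  have hni : ¬ Function.Injective φ := by
    intro hinj
    have h2 := LinearMap.finrank_le_finrank_of_injective hinj
    rw [Module.finrank_fintype_fun_eq_card, Module.finrank_fintype_fun_eq_card,
      Fintype.card_coe, Fintype.card_fin] at h2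
    omega
  obtain ⟨a, b, hab, hne⟩ := Function.not_injective_iff.1 hni
  refine ⟨ext (a - b), ?_, ?_, ?_⟩
  · intro h0
    apply hne
    have h1 : a - b = 0 := by
      funext jj
      have h2 := congrFun h0 jj.1
      simpa [ext, jj.2] using h2
    exact sub_eq_zero.1 h1
  · intro j hj; simp [ext, hj]
  · intro i
    have h1 : φ (a - b) = 0 := by rw [map_sub, hab, sub_self]
    have h2 := congrFun h1 i
    simpa [φ, ext, Matrix.mulVecLin_apply, Matrix.mulVec, dotProduct] using h2

private lemma shrink {n : ℕ} (x g : Fin n → ℝ) (hx : ∀ j, 0 ≤ x j)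
    (hsupp : ∀ j, g j ≠ 0 → x j ≠ 0) (hneg : ∃ j, g j < 0) :
    ∃ t : ℝ, 0 < t ∧ (∀ j, 0 ≤ x j + t * g j) ∧
      (Finset.univ.filter fun j => x j + t * g j ≠ 0).card <
        (Finset.univ.filter fun j => x j ≠ 0).card := by
  classical
  obtain ⟨j₀, hj₀⟩ := hneg
  set N' : Finset (Fin n) := Finset.univ.filter (fun j => g j < 0) with hN'
  have hN : N'.Nonempty := ⟨j₀, by simp [N', hj₀]⟩
  obtain ⟨jm, hjm, hmin⟩ := N'.exists_min_image (fun j => x j / (-g j)) hN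
  have hgjm : g jm < 0 := by simpa [N'] using hjm
  have hxjm : 0 < x jm := lt_of_le_of_ne (hx jm) (Ne.symm (hsupp jm (ne_of_lt hgjm)))
  refine ⟨x jm / (-g jm), div_pos hxjm (by linarith), ?_, ?_⟩
  · intro j
    rcases le_or_gt 0 (g j) with hgj | hgj
    · have := mul_nonneg (le_of_lt (div_pos hxjm (by linarith : (0:ℝ) < -g jm))) hgj
      linarith [hx j]
    · have h1 : x jm / (-g jm) ≤ x j / (-g j) := hmin j (by simp [N', hgj])
      have h2 : x jm / (-g jm) * (-g j) ≤ x j := (le_div_iff₀ (by linarith)).mp h1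
      nlinarith
  · apply Finset.card_lt_card
    rw [Finset.ssubset_iff_of_subset]
    · refine ⟨jm, ?_, ?_⟩
      · simp only [Finset.mem_filter, Finset.mem_univ, true_and]
        exact ne_of_gt hxjm
      · simp only [Finset.mem_filter, Finset.mem_univ, true_and, not_not]
        have hgne : g jm ≠ 0 := ne_of_lt hgjm
        rw [div_neg, neg_mul, div_mul_cancel₀ _ hgne, add_neg_cancel]
    · intro j hj
      simp only [Finset.mem_filter, Finset.mem_univ, true_and] at hj ⊢
      intro hxj
      apply hj
      have hgj : g j = 0 := by
        by_contra hgj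
        exact hsupp j hgj hxj
      simp [hxj, hgj]

private lemma core_base {n kk : ℕ} (hk : 1 ≤ kk) (D : Matrix (Fin kk) (Fin n) ℝ) (f : Fin kk → ℝ)
    (hD : ∀ i j, 0 ≤ D i j) (hf : ∀ i, 0 ≤ f i) (hDf : ∀ i j, D i j ≤ f i)
    (x r : Fin n → ℝ)
    (hcard : (Finset.univ.filter fun j => x j ≠ 0).card ≤ kk)
    (hx : ∀ j, 0 ≤ x j) (hxf : ∀ i, dotp (D i) x ≤ f i)
    (hr : ∀ j, 0 ≤ r j) (hrD : ∀ j, r j ≠ 0 → ∀ i, D i j = 0) :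
    (fun j => x j / ((kk : ℝ) + 1) + r j) ∈
      convexHull ℝ {y : Fin n → ℝ | (∀ j, 0 ≤ y j) ∧ isIntPt y ∧ ∀ i, dotp (D i) y ≤ f i} := by
  classical
  set S := {y : Fin n → ℝ | (∀ j, 0 ≤ y j) ∧ isIntPt y ∧ ∀ i, dotp (D i) y ≤ f i} with hS
  have hKpos : (0:ℝ) < (kk:ℝ) + 1 := by positivity
  have hfrac0 : ∀ j, (0:ℝ) ≤ x j - (⌊x j⌋:ℝ) := fun j => by
    have := Int.floor_le (x j); linarith
  have hfrac1 : ∀ j, x j - (⌊x j⌋:ℝ) < 1 := fun j => by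
    have := Int.lt_floor_add_one (x j); linarith
  have hsumfrac : ∑ j, (x j - (⌊x j⌋:ℝ)) < kk := by
    set s := Finset.univ.filter fun j => x j ≠ 0 with hs
    have hoff : ∑ j, (x j - (⌊x j⌋:ℝ)) = ∑ j ∈ s, (x j - (⌊x j⌋:ℝ)) := by
      refine (Finset.sum_subset (Finset.subset_univ s) ?_).symm
      intro j _ hj
      have hxj : x j = 0 := by
        by_contra hne
        exact hj (by simp [hs, hne])
      simp [hxj]
    rw [hoff]
    rcases s.eq_empty_or_nonempty with he | hne
    · rw [he]
      simp only [Finset.sum_empty]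
      exact_mod_cast Nat.lt_of_lt_of_le Nat.zero_lt_one hk
    · calc ∑ j ∈ s, (x j - (⌊x j⌋:ℝ)) < ∑ _j ∈ s, (1:ℝ) :=
            Finset.sum_lt_sum_of_nonempty hne (fun j _ => hfrac1 j)
        _ = s.card := by simp
        _ ≤ kk := by exact_mod_cast hcard
  set δ : ℝ := 1 - (1 + ∑ j, (x j - (⌊x j⌋:ℝ))) / ((kk:ℝ)+1) with hδ
  have hδpos : 0 < δ := by
    rw [hδ, sub_pos, div_lt_one hKpos]; linarith
  set sumr := ∑ j, r j with hsumr
  have hsumr0 : 0 ≤ sumr := Finset.sum_nonneg fun j _ => hr j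
  set M : ℤ := max 1 ⌈sumr / δ⌉ with hM
  have hM1 : (1:ℤ) ≤ M := le_max_left _ _
  have hMpos : (0:ℝ) < (M:ℝ) := by exact_mod_cast lt_of_lt_of_le zero_lt_one hM1
  have hMδ : sumr / (M:ℝ) ≤ δ := by
    rw [div_le_iff₀ hMpos]
    have h2 : (⌈sumr/δ⌉ : ℝ) ≤ (M:ℝ) := by exact_mod_cast le_max_right 1 ⌈sumr/δ⌉
    have h3 : sumr / δ ≤ (M:ℝ) := le_trans (Int.le_ceil _) h2
    have h4 := mul_le_mul_of_nonneg_right h3 hδpos.le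
    rw [div_mul_cancel₀ _ (ne_of_gt hδpos)] at h4
    linarith
  -- the generating points
  have h0S : (0 : Fin n → ℝ) ∈ S := by
    refine ⟨fun j => le_refl 0, fun j => ⟨0, by simp⟩, fun i => ?_⟩
    simp only [dotp, Pi.zero_apply, mul_zero, Finset.sum_const_zero]
    exact hf i
  have hsingle : ∀ j, Pi.single j (1:ℝ) ∈ S := by
    intro j
    refine ⟨fun j' => ?_, fun j' => ?_, fun i => ?_⟩
    · rcases eq_or_ne j' j with h | h <;> simp [Pi.single_apply, h]
    · rcases eq_or_ne j' j with h | h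
      · exact ⟨1, by simp [Pi.single_apply, h]⟩
      · exact ⟨0, by simp [Pi.single_apply, h]⟩
    · have : dotp (D i) (Pi.single j 1) = D i j := by
        simp [dotp, Pi.single_apply, mul_ite, Finset.sum_ite_eq]
      rw [this]; exact hDf i j
  have hfloorS : (fun j => (⌊x j⌋:ℝ)) ∈ S := by
    refine ⟨fun j => ?_, fun j => ⟨⌊x j⌋, rfl⟩, fun i => ?_⟩
    · show (0:ℝ) ≤ ((⌊x j⌋ : ℤ) : ℝ)
      exact_mod_cast Int.floor_nonneg.2 (hx j)
    · refine le_trans (Finset.sum_le_sum fun j _ => ?_) (hxf i)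
      exact mul_le_mul_of_nonneg_left (Int.floor_le (x j)) (hD i j)
  set pB : Fin n → (Fin n → ℝ) :=
    fun j => fun j' => if r j = 0 then (0:ℝ) else if j' = j then (M:ℝ) else 0 with hpBdef
  have hpB : ∀ j, pB j ∈ S := by
    intro j
    rcases eq_or_ne (r j) 0 with h | h
    · have hz : pB j = 0 := by funext j'; simp [pB, h]
      rw [hz]; exact h0S
    · have hDj : ∀ i, D i j = 0 := hrD j h
      refine ⟨fun j' => ?_, fun j' => ?_, fun i => ?_⟩
      · by_cases hh : j' = j <;> simp [pB, h, hh, hMpos.le]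
      · refine ⟨if j' = j then M else 0, ?_⟩
        by_cases hh : j' = j <;> simp [pB, h, hh]
      · have hz : dotp (D i) (pB j) = 0 := by
          simp [dotp, pB, h, mul_ite, Finset.sum_ite_eq', hDj]
        rw [hz]; exact hf i
  -- weights
  set w : (Fin n ⊕ Fin n) ⊕ Unit → ℝ := fun t =>
    Sum.elim (Sum.elim (fun j => (x j - (⌊x j⌋:ℝ)) / ((kk:ℝ)+1)) (fun j => r j / (M:ℝ)))
      (fun _ => 1/((kk:ℝ)+1)) t with hw
  set p : (Fin n ⊕ Fin n) ⊕ Unit → (Fin n → ℝ) := fun t =>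
    Sum.elim (Sum.elim (fun j => Pi.single j 1) pB) (fun _ => fun j => (⌊x j⌋:ℝ)) t with hp
  have hwnn : ∀ t, 0 ≤ w t := by
    rintro ((j | j) | u)
    · exact div_nonneg (hfrac0 j) hKpos.le
    · exact div_nonneg (hr j) hMpos.le
    · simp only [w, Sum.elim_inr]
      positivity
  have hws : ∑ t, w t ≤ 1 := by
    rw [Fintype.sum_sum_type, Fintype.sum_sum_type]
    simp only [w, Sum.elim_inl, Sum.elim_inr]
    have e1 : ∑ j, (x j - (⌊x j⌋:ℝ)) / ((kk:ℝ)+1) = (∑ j, (x j - (⌊x j⌋:ℝ))) / ((kk:ℝ)+1) :=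
      (Finset.sum_div _ _ _).symm
    have e2 : ∑ j, r j / (M:ℝ) = sumr / (M:ℝ) := (Finset.sum_div _ _ _).symm
    have e3 : ∑ _u : Unit, 1/((kk:ℝ)+1) = 1/((kk:ℝ)+1) := by simp
    rw [e1, e2, e3]
    have : (∑ j, (x j - (⌊x j⌋:ℝ))) / ((kk:ℝ)+1) + 1/((kk:ℝ)+1) = 1 - δ := by
      rw [hδ]; field_simp; ring
    linarith [hMδ]
  have hpS : ∀ t, p t ∈ S := by
    rintro ((j | j) | u)
    · exact hsingle j
    · exact hpB j
    · exact hfloorS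
  have hcomb := mem_hull_of_comb (S := S) p w hwnn hws hpS h0S
  have hMne : (M:ℝ) ≠ 0 := ne_of_gt hMpos
  have heq : (∑ t, w t • p t) = (fun j => x j / ((kk : ℝ) + 1) + r j) := by
    funext j₀
    rw [Finset.sum_apply, Fintype.sum_sum_type, Fintype.sum_sum_type]
    have eA : (∑ j, (w (Sum.inl (Sum.inl j)) • p (Sum.inl (Sum.inl j))) j₀)
        = (x j₀ - (⌊x j₀⌋:ℝ)) / ((kk:ℝ)+1) := by
      simp only [w, p, Sum.elim_inl, Pi.smul_apply, smul_eq_mul, Pi.single_apply,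
        mul_ite, mul_one, mul_zero]
      rw [Finset.sum_ite_eq]
      simp
    have eB : (∑ j, (w (Sum.inl (Sum.inr j)) • p (Sum.inl (Sum.inr j))) j₀) = r j₀ := by
      simp only [w, p, Sum.elim_inl, Sum.elim_inr, Pi.smul_apply, smul_eq_mul, pB]
      rw [Finset.sum_eq_single j₀]
      · by_cases h : r j₀ = 0
        · simp [h]
        · simp only [if_neg h, if_pos rfl, ↓reduceIte]
          field_simp
      · intro j _ hne
        by_cases h : r j = 0 <;> simp [h, Ne.symm hne]
      · intro habs; exact absurd (Finset.mem_univ j₀) habs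
    have eC : (∑ _u : Unit, (w (Sum.inr _u) • p (Sum.inr _u)) j₀)
        = (⌊x j₀⌋:ℝ)/((kk:ℝ)+1) := by
      simp only [w, p, Sum.elim_inr, Pi.smul_apply, smul_eq_mul,
        Finset.univ_unique, Finset.sum_singleton]
      ring
    rw [eA, eB, eC]
    field_simp
    linarith [Int.fract_add_floor (x j₀)]
  rw [heq] at hcomb
  exact hcomb

private lemma dotp_shift {n kk : ℕ} (D : Matrix (Fin kk) (Fin n) ℝ) (x g : Fin n → ℝ)
    (t : ℝ) (i : Fin kk) (hrow : ∑ j, D i j * g j = 0) :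
    dotp (D i) (fun j => x j + t * g j) = dotp (D i) x := by
  have : ∀ j ∈ Finset.univ, D i j * (x j + t * g j) = D i j * x j + t * (D i j * g j) :=
    fun j _ => by ring
  rw [dotp, Finset.sum_congr rfl this, Finset.sum_add_distrib, ← Finset.mul_sum, hrow,
    mul_zero, add_zero, dotp]

private lemma core {n kk : ℕ} (hk : 1 ≤ kk) (D : Matrix (Fin kk) (Fin n) ℝ) (f : Fin kk → ℝ)
    (hD : ∀ i j, 0 ≤ D i j) (hf : ∀ i, 0 ≤ f i) (hDf : ∀ i j, D i j ≤ f i) :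
    ∀ (N : ℕ) (x r : Fin n → ℝ),
      (Finset.univ.filter fun j => x j ≠ 0).card ≤ N →
      (∀ j, 0 ≤ x j) → (∀ i, dotp (D i) x ≤ f i) →
      (∀ j, 0 ≤ r j) → (∀ j, r j ≠ 0 → ∀ i, D i j = 0) →
      (fun j => x j / ((kk : ℝ) + 1) + r j) ∈
        convexHull ℝ {y : Fin n → ℝ | (∀ j, 0 ≤ y j) ∧ isIntPt y ∧ ∀ i, dotp (D i) y ≤ f i} := by
  intro N
  induction N with
  | zero =>
    intro x r hcard hx hxf hr hrD
    exact core_base hk D f hD hf hDf x r (hcard.trans (Nat.zero_le kk)) hx hxf hr hrD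
  | succ N ih =>
    intro x r hcard hx hxf hr hrD
    by_cases hsmall : (Finset.univ.filter fun j => x j ≠ 0).card ≤ kk
    · exact core_base hk D f hD hf hDf x r hsmall hx hxf hr hrD
    push_neg at hsmall
    obtain ⟨h, hne, hout, hrow⟩ := kernel_vec D _ hsmall
    have hKpos : (0:ℝ) < (kk:ℝ) + 1 := by positivity
    have hsupp : ∀ j, h j ≠ 0 → x j ≠ 0 := by
      intro j hj
      by_contra hxj
      exact hj (hout j (by simp [hxj]))
    -- one-signed case helper
    have key : ∀ g : Fin n → ℝ, (∀ j, g j ≤ 0) → (∃ j, g j < 0) →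
        (∀ j, g j ≠ 0 → x j ≠ 0) → (∀ i, ∑ j, D i j * g j = 0) →
        (fun j => x j / ((kk : ℝ) + 1) + r j) ∈
          convexHull ℝ {y : Fin n → ℝ | (∀ j, 0 ≤ y j) ∧ isIntPt y ∧ ∀ i, dotp (D i) y ≤ f i} := by
      intro g hg hgneg hgsupp hgrow
      obtain ⟨t, ht, hx', hcard'⟩ := shrink x g hx hgsupp hgneg
      have hcol : ∀ j, g j ≠ 0 → ∀ i, D i j = 0 := by
        intro j hj i
        have hterm : ∀ j' ∈ Finset.univ, D i j' * g j' ≤ 0 := by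
          intro j' _
          have := mul_le_mul_of_nonneg_left (hg j') (hD i j')
          simpa using this
        have hz := (Finset.sum_eq_zero_iff_of_nonpos hterm).1 (hgrow i) j (Finset.mem_univ j)
        rcases mul_eq_zero.1 hz with h' | h'
        · exact h'
        · exact absurd h' hj
      set r' : Fin n → ℝ := fun j => r j - t / ((kk:ℝ)+1) * g j with hr'def
      have hr' : ∀ j, 0 ≤ r' j := by
        intro j
        simp only [hr'def]
        have h1 := hg j
        have h2 := hr j
        have h3 : 0 ≤ t / ((kk:ℝ)+1) := div_nonneg ht.le hKpos.le
        nlinarith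
      have hr'D : ∀ j, r' j ≠ 0 → ∀ i, D i j = 0 := by
        intro j hj i
        by_cases hgj : g j = 0
        · have : r j ≠ 0 := by simpa [r', hgj] using hj
          exact hrD j this i
        · exact hcol j hgj i
      have hrows' : ∀ i, dotp (D i) (fun j => x j + t * g j) ≤ f i := fun i => by
        rw [dotp_shift D x g t i (hgrow i)]; exact hxf i
      have hmem := ih (fun j => x j + t * g j) r'
        (by simpa using Nat.lt_succ_iff.1 (lt_of_lt_of_le hcard' hcard)) hx' hrows' hr' hr'D
      have hfun : (fun j => (x j + t * g j)/((kk:ℝ)+1) + r' j)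
          = (fun j => x j/((kk:ℝ)+1) + r j) := by
        funext j
        simp only [r']
        field_simp
        ring
      rwa [hfun] at hmem
    by_cases hPos : ∃ j, 0 < h j
    · by_cases hNeg : ∃ j, h j < 0
      · -- both signs: convex combination of two shrinks
        obtain ⟨t₁, ht₁, hx₁, hc₁⟩ := shrink x h hx hsupp hNeg
        have hsupp' : ∀ j, (-h) j ≠ 0 → x j ≠ 0 := by
          intro j hj; exact hsupp j (by simpa using hj)
        have hNeg' : ∃ j, (-h) j < 0 := by
          obtain ⟨j, hj⟩ := hPos; exact ⟨j, by simpa using hj⟩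
        obtain ⟨t₂, ht₂, hx₂, hc₂⟩ := shrink x (-h) hx hsupp' hNeg'
        have hrow' : ∀ i, ∑ j, D i j * (-h) j = 0 := by
          intro i
          have := hrow i
          simp only [Pi.neg_apply, mul_neg, Finset.sum_neg_distrib]
          linarith
        have hrows₁ : ∀ i, dotp (D i) (fun j => x j + t₁ * h j) ≤ f i := fun i => by
          rw [dotp_shift D x h t₁ i (hrow i)]; exact hxf i
        have hrows₂ : ∀ i, dotp (D i) (fun j => x j + t₂ * (-h) j) ≤ f i := fun i => by
          rw [dotp_shift D x (-h) t₂ i (hrow' i)]; exact hxf i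
        have hm₁ := ih (fun j => x j + t₁ * h j) r
          (by simpa using Nat.lt_succ_iff.1 (lt_of_lt_of_le hc₁ hcard)) hx₁ hrows₁ hr hrD
        have hm₂ := ih (fun j => x j + t₂ * (-h) j) r
          (by simpa using Nat.lt_succ_iff.1 (lt_of_lt_of_le hc₂ hcard)) hx₂ hrows₂ hr hrD
        have hts : 0 < t₁ + t₂ := by linarith
        have hcvx := (convex_convexHull ℝ
            {y : Fin n → ℝ | (∀ j, 0 ≤ y j) ∧ isIntPt y ∧ ∀ i, dotp (D i) y ≤ f i})
          hm₁ hm₂ (by positivity : (0:ℝ) ≤ t₂/(t₁+t₂)) (by positivity : (0:ℝ) ≤ t₁/(t₁+t₂))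
          (by rw [← add_div, add_comm]; exact div_self (ne_of_gt hts))
        have hfun : (t₂/(t₁+t₂)) • (fun j => (x j + t₁ * h j)/((kk:ℝ)+1) + r j)
              + (t₁/(t₁+t₂)) • (fun j => (x j + t₂ * (-h) j)/((kk:ℝ)+1) + r j)
            = (fun j => x j/((kk:ℝ)+1) + r j) := by
          funext j
          simp only [Pi.add_apply, Pi.smul_apply, smul_eq_mul, Pi.neg_apply]
          field_simp
          ring
        rwa [hfun] at hcvx
      · -- h ≥ 0 everywhere, some positive: use -h
        push_neg at hNeg
        refine key (-h) (fun j => by simpa using hNeg j) ?_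
          (fun j hj => hsupp j (by simpa using hj)) ?_
        · obtain ⟨j, hj⟩ := hPos
          exact ⟨j, by simpa using hj⟩
        · intro i
          have := hrow i
          simp only [Pi.neg_apply, mul_neg, Finset.sum_neg_distrib]
          linarith
    · -- h ≤ 0 everywhere
      push_neg at hPos
      have hNeg : ∃ j, h j < 0 := by
        by_contra hcon
        push_neg at hcon
        apply hne
        funext j
        exact le_antisymm (hPos j) (hcon j)
      exact key h hPos hNeg hsupp hrow

private lemma step_mem {n kk : ℕ} (hk : 1 ≤ kk) (P : Set (Fin n → ℝ))
    (hP1 : ∀ j, Pi.single j 1 ∈ P) (x : Fin n → ℝ) (hx : x ∈ P) (hx0 : ∀ j, 0 ≤ x j) :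
    (fun j => x j / ((kk:ℝ) + 1)) ∈ aggKP kk P := by
  rw [aggKP, Set.mem_iInter]
  rintro ⟨⟨D, f⟩, hD, hf, hval⟩
  have hDf : ∀ i j, D i j ≤ f i := by
    intro i j
    have hv := hval _ (hP1 j) i
    have he : dotp (D i) (Pi.single j 1) = D i j := by
      simp [dotp, Pi.single_apply, mul_ite, Finset.sum_ite_eq]
    rwa [he] at hv
  have hm := core hk D f hD hf hDf (Finset.univ.filter fun j => x j ≠ 0).card x 0
    le_rfl hx0 (fun i => hval x hx i) (fun j => le_rfl) (fun j hj => absurd rfl hj)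
  simpa using hm

private lemma iter_all {n m kk : ℕ} (A : Matrix (Fin m) (Fin n) ℝ) (b : Fin m → ℝ)
    (hAb : ∀ i j, A i j ≤ b i) (hk : 1 ≤ kk) :
    ∀ t : ℕ, (∀ j, Pi.single j 1 ∈ (aggKP kk)^[t] (packLP A b)) ∧
      ∀ x ∈ packLP A b, (fun j => x j / ((kk:ℝ)+1)^t) ∈ (aggKP kk)^[t] (packLP A b) := by
  have hKpos : (0:ℝ) < (kk:ℝ) + 1 := by positivity
  have hsingleQ : ∀ j, Pi.single j (1:ℝ) ∈ packLP A b := by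
    intro j
    constructor
    · intro j'
      rcases eq_or_ne j' j with h | h <;> simp [Pi.single_apply, h]
    · intro i
      have he : dotp (A i) (Pi.single j 1) = A i j := by
        simp [dotp, Pi.single_apply, mul_ite, Finset.sum_ite_eq]
      rw [he]; exact hAb i j
  intro t
  induction t with
  | zero =>
    refine ⟨hsingleQ, fun x hx => ?_⟩
    simpa using hx
  | succ t ih =>
    obtain ⟨ih1, ih2⟩ := ih
    constructor
    · intro j
      rw [Function.iterate_succ_apply', aggKP, Set.mem_iInter]
      rintro ⟨⟨D, f⟩, hD, hf, hval⟩
      apply subset_convexHull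
      refine ⟨?_, ?_, fun i => hval _ (ih1 j) i⟩
      · intro j'
        rcases eq_or_ne j' j with h | h <;> simp [Pi.single_apply, h]
      · intro j'
        rcases eq_or_ne j' j with h | h
        · exact ⟨1, by simp [Pi.single_apply, h]⟩
        · exact ⟨0, by simp [Pi.single_apply, h]⟩
    · intro x hx
      rw [Function.iterate_succ_apply']
      have hx0 : ∀ j, 0 ≤ x j / ((kk:ℝ)+1)^t := fun j =>
        div_nonneg (hx.1 j) (by positivity)
      have hm := step_mem hk _ ih1 _ (ih2 x hx) hx0
      have hfun : (fun j => (x j / ((kk:ℝ)+1)^t) / ((kk:ℝ)+1))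
          = (fun j => x j / ((kk:ℝ)+1)^(t+1)) := by
        funext j
        rw [div_div, ← pow_succ]
      rwa [hfun] at hm

/-- For a packing polyhedron `Q = {x ≥ 0 : Ax ≤ b}` with `A i j ≤ b i`,
any number `ℓ ≥ 1` of rounds of the `k`-aggregation closure reaching the integer hull
satisfies `ℓ ≥ ⌈log₂(z^LP/z^I) / log₂(k+1)⌉`. -/
theorem stmt4 {n m : ℕ} (A : Matrix (Fin m) (Fin n) ℝ) (b : Fin m → ℝ)
    (hA : ∀ i j, 0 ≤ A i j) (hb : ∀ i, 0 ≤ b i)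
    (hAq : ∀ i j, ∃ q : ℚ, A i j = (q : ℝ)) (hbq : ∀ i, ∃ q : ℚ, b i = (q : ℝ))
    (hAb : ∀ i j, A i j ≤ b i)
    (k : ℕ) (hk : 1 ≤ k)
    (c : Fin n → ℝ) (hc : ∀ j, 0 ≤ c j)
    (zLP zI : ℝ)
    (hLP : IsLUB {r | ∃ x ∈ packLP A b, r = dotp c x} zLP)
    (hI : IsLUB {r | ∃ x ∈ packLP A b, isIntPt x ∧ r = dotp c x} zI)
    (hzI : 0 < zI)
    (l : ℕ) (hl : 1 ≤ l)
    (hconv : (aggKP k)^[l] (packLP A b)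
      = convexHull ℝ {x | x ∈ packLP A b ∧ isIntPt x}) :
    ⌈Real.logb 2 (zLP / zI) / Real.logb 2 (k + 1)⌉ ≤ (l : ℤ) := by
  have hKpos : (0:ℝ) < (k:ℝ) + 1 := by positivity
  have hK1 : (1:ℝ) < (k:ℝ) + 1 := by
    have : (1:ℝ) ≤ (k:ℝ) := by exact_mod_cast hk
    linarith
  have hKl : (0:ℝ) < ((k:ℝ)+1)^l := by positivity
  -- dotp c is at most zI on the integer hull
  have hhull : ∀ z ∈ convexHull ℝ {x | x ∈ packLP A b ∧ isIntPt x}, dotp c z ≤ zI := by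
    intro z hz
    have hsub : {x : Fin n → ℝ | x ∈ packLP A b ∧ isIntPt x} ⊆ {z | dotp c z ≤ zI} := by
      rintro y ⟨hy1, hy2⟩
      exact hI.1 ⟨y, hy1, hy2, rfl⟩
    have hcvx : Convex ℝ {z : Fin n → ℝ | dotp c z ≤ zI} := by
      intro u hu v hv a b' ha hb' hab
      have he : dotp c (a • u + b' • v) = a * dotp c u + b' * dotp c v := by
        simp only [dotp, Pi.add_apply, Pi.smul_apply, smul_eq_mul, Finset.mul_sum]
        rw [← Finset.sum_add_distrib]
        exact Finset.sum_congr rfl fun j _ => by ring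
      have : dotp c (a • u + b' • v) ≤ a * zI + b' * zI := by
        rw [he]
        exact add_le_add (mul_le_mul_of_nonneg_left hu ha)
          (mul_le_mul_of_nonneg_left hv hb')
      simpa [hab] using this.trans (le_of_eq (by rw [← add_mul, hab, one_mul]))
    exact convexHull_min hsub hcvx hz
  -- every x in Q has dotp c x ≤ K^l * zI
  have hub : ∀ x ∈ packLP A b, dotp c x ≤ ((k:ℝ)+1)^l * zI := by
    intro x hx
    have hmem := ((iter_all A b hAb hk l).2) x hx
    rw [hconv] at hmem
    have hle := hhull _ hmem
    have he : dotp c (fun j => x j / ((k:ℝ)+1)^l) = dotp c x / ((k:ℝ)+1)^l := by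
      simp only [dotp]
      rw [Finset.sum_div]
      exact Finset.sum_congr rfl fun j _ => by ring
    rw [he, div_le_iff₀ hKl] at hle
    linarith
  have hzLP : zLP ≤ ((k:ℝ)+1)^l * zI := by
    apply hLP.2
    rintro r ⟨x, hx, rfl⟩
    exact hub x hx
  have hzIzLP : zI ≤ zLP := by
    apply hI.2
    rintro r ⟨x, hx, _, rfl⟩
    exact hLP.1 ⟨x, hx, rfl⟩
  -- arithmetic
  have hratio : zLP / zI ≤ ((k:ℝ)+1)^l := by
    rw [div_le_iff₀ hzI]
    linarith
  have hratio1 : (1:ℝ) ≤ zLP / zI := by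
    rw [le_div_iff₀ hzI]
    linarith
  have hlog : Real.logb 2 (zLP / zI) ≤ (l:ℝ) * Real.logb 2 ((k:ℝ)+1) := by
    calc Real.logb 2 (zLP / zI) ≤ Real.logb 2 (((k:ℝ)+1)^l) :=
          Real.logb_le_logb_of_le one_lt_two (by linarith) hratio
      _ = (l:ℝ) * Real.logb 2 ((k:ℝ)+1) := Real.logb_pow 2 _ l
  have hlogK : 0 < Real.logb 2 ((k:ℝ)+1) := Real.logb_pos one_lt_two hK1
  have hdiv : Real.logb 2 (zLP / zI) / Real.logb 2 ((k:ℝ)+1) ≤ (l:ℝ) := by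
    rw [div_le_iff₀ hlogK]
    linarith
  rw [Int.ceil_le]
  push_cast
  exact hdiv
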